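/- Let μ be a Λ-nice measure, K an s-dimensional CZ kernel, and K^δ = K − K_δ the localized kernel. Fix x ∈ ℝ^d, r > 0, δ > 0, and A > 1. If f is Lipschitz, compactly supported in B(x, r+2δ), satisfies 0 ≤ f ≤ 1 on ℝ^d, f ≡ 1 on B(x, r+δ), and ‖f‖_{Lip} ≤ A/δ, then |∬ K^δ(z−y) H_{f, 1−f}(z,y) dμ(z) dμ(y)| ≤ C_3 A · μ(B(x, r+2δ) \ B(x,r)), where H_{f,g}(z,y) = (1/2)[f(y)g(z) − f(z)g(y)] and C_3 depends only on d, s, Λ. -/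

import Mathlib

open Classical MeasureTheory Metric

open ENNReal

section Stmt10Aux

variable {d : ℕ}

/-- The comparison kernel `φ(w) = ‖w‖^{1-s}` localized to `0 < ‖w‖ < δ`. -/
noncomputable def stmt10phi (s δ : ℝ) (w : EuclideanSpace ℝ (Fin d)) : ℝ :=
  if ‖w‖ < δ ∧ w ≠ 0 then ‖w‖ ^ (1 - s) else 0

lemma stmt10phi_nonneg (s δ : ℝ) (w : EuclideanSpace ℝ (Fin d)) : 0 ≤ stmt10phi s δ w := by
  unfold stmt10phi
  split
  · exact Real.rpow_nonneg (norm_nonneg _) _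
  · exact le_refl 0

lemma stmt10phi_neg (s δ : ℝ) (w : EuclideanSpace ℝ (Fin d)) :
    stmt10phi s δ (-w) = stmt10phi s δ w := by
  simp [stmt10phi, norm_neg, neg_eq_zero]

lemma measurable_stmt10phi (s δ : ℝ) : Measurable (stmt10phi (d := d) s δ) := by
  have hset : MeasurableSet {w : EuclideanSpace ℝ (Fin d) | ‖w‖ < δ ∧ w ≠ 0} := by
    have : {w : EuclideanSpace ℝ (Fin d) | ‖w‖ < δ ∧ w ≠ 0}
        = {w | ‖w‖ < δ} ∩ ({(0 : EuclideanSpace ℝ (Fin d))}ᶜ) := by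
      ext w
      simp [Set.mem_setOf_eq, Set.mem_compl_iff]
    rw [this]
    exact (measurableSet_lt measurable_norm measurable_const).inter
      (measurableSet_singleton _).compl
  have heq : stmt10phi (d := d) s δ = fun w =>
      if ‖w‖ < δ ∧ w ≠ 0 then Real.exp (Real.log ‖w‖ * (1 - s)) else 0 := by
    funext w
    unfold stmt10phi
    by_cases h : ‖w‖ < δ ∧ w ≠ 0
    · rw [if_pos h, if_pos h, Real.rpow_def_of_pos (norm_pos_iff.mpr h.2)]
    · rw [if_neg h, if_neg h]
  rw [heq]
  exact Measurable.ite hset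
    (Real.measurable_exp.comp ((Real.measurable_log.comp measurable_norm).mul measurable_const))
    measurable_const

/-- Key growth estimate: the integral of the localized kernel comparison function against a
`Λ`-nice measure is at most `2 · 2^s · Λ · δ`. -/
lemma stmt10_lintegral_phi_le {s Λ δ : ℝ} (hs : 0 < s) (hΛ : 0 < Λ) (hδ : 0 < δ)
    (μ : Measure (EuclideanSpace ℝ (Fin d)))
    (hμ : ∀ (z : EuclideanSpace ℝ (Fin d)) (ρ : ℝ), 0 < ρ →
      μ (ball z ρ) ≤ ENNReal.ofReal (Λ * ρ ^ s))
    (z : EuclideanSpace ℝ (Fin d)) :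
    ∫⁻ y, ENNReal.ofReal (stmt10phi s δ (z - y)) ∂μ ≤ ENNReal.ofReal (2 * 2 ^ s * Λ * δ) := by
  set ρk : ℕ → ℝ := fun k => δ / 2 ^ k with hρk
  have hρpos : ∀ k, 0 < ρk k := fun k => div_pos hδ (by positivity)
  set Ak : ℕ → Set (EuclideanSpace ℝ (Fin d)) :=
    fun k => ball z (ρk k) \ ball z (ρk (k + 1)) with hAk
  have hAkm : ∀ k, MeasurableSet (Ak k) := fun k => measurableSet_ball.diff measurableSet_ball
  -- support of the integrand is contained in the union of the dyadic annuli
  have hsub : ∀ y, ENNReal.ofReal (stmt10phi s δ (z - y)) ≠ 0 → y ∈ ⋃ k, Ak k := by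
    intro y hy
    have hcond : ‖z - y‖ < δ ∧ z - y ≠ 0 := by
      by_contra h
      simp [stmt10phi, h] at hy
    set t := dist y z with ht
    have htz : t = ‖z - y‖ := by rw [ht, dist_comm, dist_eq_norm]
    have ht0 : 0 < t := by rw [htz]; exact norm_pos_iff.mpr hcond.2
    have htδ : t < δ := htz ▸ hcond.1
    obtain ⟨n, hn⟩ := pow_unbounded_of_one_lt (R := ℝ) (δ / t) one_lt_two
    have hex : ∃ k, ρk (k + 1) ≤ t := by
      refine ⟨n, ?_⟩
      rw [hρk]
      dsimp only
      rw [div_le_iff₀ (by positivity)]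
      have hδlt : δ < 2 ^ n * t := by
        have := (div_lt_iff₀ ht0).mp hn
        linarith
      nlinarith [pow_succ (2 : ℝ) n, pow_pos (show (0:ℝ) < 2 by norm_num) n, ht0.le]
    set k0 := Nat.find hex with hk0
    have h1 : ρk (k0 + 1) ≤ t := Nat.find_spec hex
    have h2 : t < ρk k0 := by
      rcases Nat.eq_zero_or_pos k0 with h | h
      · rw [h]; simpa [ρk] using htδ
      · have hmin := Nat.find_min hex (m := k0 - 1) (by omega)
        push_neg at hmin
        have : t < ρk (k0 - 1 + 1) := hmin
        rwa [Nat.sub_add_cancel h] at this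
    refine Set.mem_iUnion.mpr ⟨k0, mem_ball.mpr h2, fun hmem => ?_⟩
    exact absurd (mem_ball.mp hmem) (not_lt.mpr h1)
  have h2s1 : (1 : ℝ) ≤ 2 ^ s := by
    rw [show (1:ℝ) = (2:ℝ) ^ (0:ℝ) from (Real.rpow_zero 2).symm]
    exact Real.rpow_le_rpow_of_exponent_le one_le_two hs.le
  -- termwise bound on each annulus
  have hterm : ∀ k, ∫⁻ y in Ak k, ENNReal.ofReal (stmt10phi s δ (z - y)) ∂μ
      ≤ ENNReal.ofReal (2 ^ s * Λ * δ) * ENNReal.ofReal ((1 / 2 : ℝ) ^ k) := by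
    intro k
    have hb : ∀ y ∈ Ak k, ENNReal.ofReal (stmt10phi s δ (z - y))
        ≤ ENNReal.ofReal (2 ^ s * ρk k ^ (1 - s)) := by
      intro y hy
      apply ENNReal.ofReal_le_ofReal
      have hylt : dist y z < ρk k := mem_ball.mp hy.1
      have hyge : ρk (k + 1) ≤ dist y z := le_of_not_gt fun h => hy.2 (mem_ball.mpr h)
      have htz : ‖z - y‖ = dist y z := by rw [dist_comm, dist_eq_norm]
      unfold stmt10phi
      split
      · rw [htz]
        have ht0 : 0 < dist y z := lt_of_lt_of_le (hρpos (k + 1)) hyge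
        rcases le_or_gt s 1 with hs1 | hs1
        · calc dist y z ^ (1 - s) ≤ ρk k ^ (1 - s) :=
                Real.rpow_le_rpow ht0.le hylt.le (by linarith)
            _ ≤ 2 ^ s * ρk k ^ (1 - s) :=
                le_mul_of_one_le_left (Real.rpow_nonneg (hρpos k).le _) h2s1
        · have hstep : dist y z ^ (1 - s) ≤ ρk (k + 1) ^ (1 - s) :=
            Real.rpow_le_rpow_of_nonpos (hρpos (k + 1)) hyge (by linarith)
          refine hstep.trans ?_
          have heq2 : ρk (k + 1) = ρk k * 2⁻¹ := by
            rw [hρk]; dsimp only; rw [pow_succ]; field_simp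
          rw [heq2, Real.mul_rpow (hρpos k).le (by norm_num)]
          have hpow2 : ((2:ℝ)⁻¹) ^ (1 - s) = 2 ^ (s - 1) := by
            rw [← Real.rpow_neg_one 2, ← Real.rpow_mul (by norm_num)]
            congr 1
            ring
          rw [hpow2]
          have h3 : (2:ℝ) ^ (s - 1) ≤ 2 ^ s :=
            Real.rpow_le_rpow_of_exponent_le one_le_two (by linarith)
          have h4 : (0:ℝ) ≤ ρk k ^ (1 - s) := Real.rpow_nonneg (hρpos k).le _
          nlinarith [Real.rpow_nonneg (show (0:ℝ) ≤ 2 by norm_num) (s - 1)]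
      · positivity
    have hρval : ρk k = δ * (1 / 2 : ℝ) ^ k := by
      rw [hρk]; dsimp only
      rw [div_eq_mul_inv, one_div, inv_pow]
    calc ∫⁻ y in Ak k, ENNReal.ofReal (stmt10phi s δ (z - y)) ∂μ
        ≤ ∫⁻ _ in Ak k, ENNReal.ofReal (2 ^ s * ρk k ^ (1 - s)) ∂μ :=
          setLIntegral_mono' (hAkm k) hb
      _ = ENNReal.ofReal (2 ^ s * ρk k ^ (1 - s)) * μ (Ak k) := setLIntegral_const _ _
      _ ≤ ENNReal.ofReal (2 ^ s * ρk k ^ (1 - s)) * ENNReal.ofReal (Λ * ρk k ^ s) := by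
          refine mul_le_mul_right ?_ _
          exact (measure_mono Set.diff_subset).trans (hμ z (ρk k) (hρpos k))
      _ = ENNReal.ofReal (2 ^ s * Λ * δ * (1 / 2 : ℝ) ^ k) := by
          rw [← ENNReal.ofReal_mul (by positivity)]
          congr 1
          have hexp : ρk k ^ (1 - s) * ρk k ^ s = ρk k := by
            rw [← Real.rpow_add (hρpos k)]
            norm_num
          calc 2 ^ s * ρk k ^ (1 - s) * (Λ * ρk k ^ s)
              = 2 ^ s * Λ * (ρk k ^ (1 - s) * ρk k ^ s) := by ring
            _ = 2 ^ s * Λ * ρk k := by rw [hexp]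
            _ = 2 ^ s * Λ * (δ * (1 / 2 : ℝ) ^ k) := by rw [hρval]
            _ = 2 ^ s * Λ * δ * (1 / 2 : ℝ) ^ k := by ring
      _ = ENNReal.ofReal (2 ^ s * Λ * δ) * ENNReal.ofReal ((1 / 2 : ℝ) ^ k) :=
          ENNReal.ofReal_mul (by positivity)
  have hgeom : (∑' k : ℕ, ENNReal.ofReal ((1 / 2 : ℝ) ^ k)) = 2 := by
    have h1 : ∀ k : ℕ, ENNReal.ofReal ((1 / 2 : ℝ) ^ k) = (2⁻¹ : ℝ≥0∞) ^ k := by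
      intro k
      rw [ENNReal.ofReal_pow (by norm_num)]
      congr 1
      rw [one_div, ENNReal.ofReal_inv_of_pos (by norm_num)]
      norm_num
    simp_rw [h1]
    rw [ENNReal.tsum_geometric, ENNReal.one_sub_inv_two, inv_inv]
  have heq : (fun y => ENNReal.ofReal (stmt10phi s δ (z - y)))
      = fun y => Set.indicator (⋃ k, Ak k)
        (fun y => ENNReal.ofReal (stmt10phi s δ (z - y))) y := by
    funext y
    by_cases h : y ∈ ⋃ k, Ak k
    · rw [Set.indicator_of_mem h]
    · rw [Set.indicator_of_notMem h]
      by_contra hne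
      exact h (hsub y hne)
  calc ∫⁻ y, ENNReal.ofReal (stmt10phi s δ (z - y)) ∂μ
      = ∫⁻ y in ⋃ k, Ak k, ENNReal.ofReal (stmt10phi s δ (z - y)) ∂μ := by
        conv_lhs => rw [heq]
        exact lintegral_indicator (MeasurableSet.iUnion hAkm) _
    _ ≤ ∑' k, ∫⁻ y in Ak k, ENNReal.ofReal (stmt10phi s δ (z - y)) ∂μ :=
        lintegral_iUnion_le _ _
    _ ≤ ∑' k, ENNReal.ofReal (2 ^ s * Λ * δ) * ENNReal.ofReal ((1 / 2 : ℝ) ^ k) :=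
        ENNReal.tsum_le_tsum hterm
    _ = ENNReal.ofReal (2 ^ s * Λ * δ) * ∑' k : ℕ, ENNReal.ofReal ((1 / 2 : ℝ) ^ k) :=
        ENNReal.tsum_mul_left
    _ = ENNReal.ofReal (2 ^ s * Λ * δ) * 2 := by rw [hgeom]
    _ = ENNReal.ofReal (2 * 2 ^ s * Λ * δ) := by
        rw [show (2 : ℝ≥0∞) = ENNReal.ofReal 2 by norm_num,
          ← ENNReal.ofReal_mul (by positivity)]
        congr 1
        ring

end Stmt10Aux

/-- For a `Λ`-nice measure `μ` and the localized kernel `K^δ = K − K_δ`, if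
`f` is Lipschitz with constant `A/δ`, `0 ≤ f ≤ 1`, supported in `B(x,r+2δ)` and `f ≡ 1`
on `B(x,r+δ)`, then `|∬ K^δ(z−y) H_{f,1−f}(z,y) dμ dμ| ≤ C₃ A μ(B(x,r+2δ) \ B(x,r))`
with `C₃ = C₃(d,s,Λ)`. -/
theorem stmt10 (d : ℕ) (hd : 2 ≤ d) (s α Λ : ℝ) (hs : 0 < s) (hsd : s < d)
    (hα0 : 0 < α) (hα1 : α ≤ 1) (hΛ : 0 < Λ) :
    ∃ C₃ : ℝ, 0 < C₃ ∧
      ∀ (μ : Measure (EuclideanSpace ℝ (Fin d))),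
        (∀ (z : EuclideanSpace ℝ (Fin d)) (ρ : ℝ), 0 < ρ →
          μ (ball z ρ) ≤ ENNReal.ofReal (Λ * ρ ^ s)) →
        ∀ (K : EuclideanSpace ℝ (Fin d) → ℂ),
          (∀ z, z ≠ 0 → ‖K z‖ ≤ (‖z‖ ^ s)⁻¹) →
          (∀ z, K (-z) = -K z) →
          ∀ (x : EuclideanSpace ℝ (Fin d)) (r δ A : ℝ), 0 < r → 0 < δ → 1 < A →
            ∀ f : EuclideanSpace ℝ (Fin d) → ℝ,
              HasCompactSupport f → tsupport f ⊆ ball x (r + 2 * δ) →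
              (∀ z, 0 ≤ f z ∧ f z ≤ 1) →
              (∀ z ∈ ball x (r + δ), f z = 1) →
              (∀ z w, |f z - f w| ≤ (A / δ) * ‖z - w‖) →
              ‖∫ z, ∫ y,
                  (if z - y = 0 then 0 else
                      K (z - y) * ((1 - (‖z - y‖ / max δ ‖z - y‖) ^ (s + α) : ℝ) : ℂ))
                    * ((((1 : ℝ) / 2) * (f y * (1 - f z) - f z * (1 - f y)) : ℝ) : ℂ) ∂μ ∂μ‖
                ≤ C₃ * A * (μ (ball x (r + 2 * δ) \ ball x r)).toReal := by
  refine ⟨2 * 2 ^ s * Λ, by positivity, ?_⟩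
  intro μ hμ K hK hKodd x r δ A hr hδ hA f hfc hfsupp hf01 hf1 hflip
  have hA0 : (0:ℝ) < A := lt_trans one_pos hA
  haveI hσ : SigmaFinite μ := by
    refine ⟨⟨⟨fun n => ball 0 (n + 1), fun _ => Set.mem_univ _, fun n => ?_, ?_⟩⟩⟩
    · exact lt_of_le_of_lt (hμ 0 (n + 1) (by positivity)) ENNReal.ofReal_lt_top
    · rw [Set.iUnion_eq_univ_iff]
      intro v
      obtain ⟨n, hn⟩ := exists_nat_gt (dist v 0)
      exact ⟨n, mem_ball.mpr (by linarith)⟩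
  set S : Set (EuclideanSpace ℝ (Fin d)) := ball x (r + 2 * δ) \ ball x r with hSdef
  have hSmeas : MeasurableSet S := measurableSet_ball.diff measurableSet_ball
  set iS : EuclideanSpace ℝ (Fin d) → ℝ≥0∞ := fun z => S.indicator (fun _ => 1) z with hiSdef
  set p : EuclideanSpace ℝ (Fin d) → ℝ≥0∞ := fun w => ENNReal.ofReal (stmt10phi s δ w)
    with hpdef
  set c₁ : ℝ≥0∞ := ENNReal.ofReal (A / (2 * δ)) with hc1
  set c₂ : ℝ≥0∞ := ENNReal.ofReal (2 * 2 ^ s * Λ * δ) with hc2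
  have hpm : Measurable p := (measurable_stmt10phi s δ).ennreal_ofReal
  have hiSm : Measurable iS := measurable_const.indicator hSmeas
  -- support dichotomy
  have hSor : ∀ z y : EuclideanSpace ℝ (Fin d), z - y ≠ 0 → ‖z - y‖ < δ → f z ≠ f y →
      z ∈ S ∨ y ∈ S := by
    intro z y h0 hlt hne
    by_contra h
    push_neg at h
    obtain ⟨hzS, hyS⟩ := h
    rw [hSdef, Set.mem_diff] at hzS hyS
    push_neg at hzS hyS
    have hdzy : dist z y < δ := by rw [dist_eq_norm]; exact hlt
    by_cases hz2 : z ∈ ball x (r + 2 * δ)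
    · have hzr : z ∈ ball x r := hzS hz2
      have hfz : f z = 1 := hf1 z (mem_ball.mpr (lt_of_lt_of_le (mem_ball.mp hzr) (by linarith)))
      have hy : y ∈ ball x (r + δ) := by
        rw [mem_ball]
        calc dist y x ≤ dist y z + dist z x := dist_triangle _ _ _
          _ < δ + r := by
              rw [dist_comm y z]
              have hzr' := mem_ball.mp hzr
              linarith
          _ = r + δ := by ring
      exact hne (hfz.trans (hf1 y hy).symm)
    · have hfz : f z = 0 := image_eq_zero_of_notMem_tsupport (fun hmem => hz2 (hfsupp hmem))
      have hzx : r + 2 * δ ≤ dist z x := le_of_not_gt (fun h => hz2 (mem_ball.mpr h))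
      have hy2 : y ∉ ball x (r + 2 * δ) := by
        intro hy2
        have hyr : y ∈ ball x r := hyS hy2
        have : dist z x ≤ dist z y + dist y x := dist_triangle _ _ _
        have := mem_ball.mp hyr
        linarith
      have hfy : f y = 0 := image_eq_zero_of_notMem_tsupport (fun hmem => hy2 (hfsupp hmem))
      exact hne (hfz.trans hfy.symm)
  -- pointwise bound
  have hptw : ∀ (g : EuclideanSpace ℝ (Fin d) → EuclideanSpace ℝ (Fin d) → ℂ),
      (g = fun z y =>
        (if z - y = 0 then 0 else
            K (z - y) * ((1 - (‖z - y‖ / max δ ‖z - y‖) ^ (s + α) : ℝ) : ℂ))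
          * ((((1 : ℝ) / 2) * (f y * (1 - f z) - f z * (1 - f y)) : ℝ) : ℂ)) →
      ∀ z y, ENNReal.ofReal ‖g z y‖ ≤ c₁ * ((iS z + iS y) * p (z - y)) := by
    intro g hgdef z y
    rw [hgdef]
    dsimp only
    by_cases h0 : z - y = 0
    · simp [h0]
    by_cases hne : f z = f y
    · have hz0 : (1:ℝ) / 2 * (f y * (1 - f z) - f z * (1 - f y)) = 0 := by rw [hne]; ring
      rw [hz0]
      simp
    by_cases hlt : ‖z - y‖ < δ
    · have hmem := hSor z y h0 hlt hne
      have hw : (0:ℝ) < ‖z - y‖ := norm_pos_iff.mpr h0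
      have hmax : max δ ‖z - y‖ = δ := max_eq_left hlt.le
      have hnorm : ‖(if z - y = 0 then 0 else
            K (z - y) * ((1 - (‖z - y‖ / max δ ‖z - y‖) ^ (s + α) : ℝ) : ℂ))
          * ((((1 : ℝ) / 2) * (f y * (1 - f z) - f z * (1 - f y)) : ℝ) : ℂ)‖
          ≤ (A / (2 * δ)) * stmt10phi s δ (z - y) := by
        rw [if_neg h0, norm_mul, norm_mul, Complex.norm_real, Complex.norm_real]
        have hρ0 : (0:ℝ) ≤ (‖z - y‖ / max δ ‖z - y‖) ^ (s + α) :=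
          Real.rpow_nonneg (by positivity) _
        have hρ1 : (‖z - y‖ / max δ ‖z - y‖) ^ (s + α) ≤ 1 := by
          apply Real.rpow_le_one (by positivity) _ (by linarith)
          rw [hmax]
          exact div_le_one_of_le₀ hlt.le hδ.le
        have h1 : ‖(1 - (‖z - y‖ / max δ ‖z - y‖) ^ (s + α) : ℝ)‖ ≤ 1 := by
          rw [Real.norm_eq_abs, abs_of_nonneg (by linarith)]
          linarith
        have h2 : ‖(1:ℝ) / 2 * (f y * (1 - f z) - f z * (1 - f y))‖
            ≤ 1 / 2 * ((A / δ) * ‖z - y‖) := by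
          have hfy : f y * (1 - f z) - f z * (1 - f y) = f y - f z := by ring
          rw [hfy, Real.norm_eq_abs, abs_mul, abs_of_nonneg (by norm_num : (0:ℝ) ≤ 1/2)]
          have hlip := hflip y z
          have hrev : ‖y - z‖ = ‖z - y‖ := norm_sub_rev _ _
          rw [hrev] at hlip
          nlinarith [abs_nonneg (f y - f z)]
        have hKb := hK (z - y) h0
        have hphi : stmt10phi s δ (z - y) = ‖z - y‖ ^ (1 - s) := by
          unfold stmt10phi
          rw [if_pos ⟨hlt, h0⟩]
        rw [hphi]
        have hps : (0:ℝ) < ‖z - y‖ ^ s := Real.rpow_pos_of_pos hw s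
        calc ‖K (z - y)‖ * ‖(1 - (‖z - y‖ / max δ ‖z - y‖) ^ (s + α) : ℝ)‖
              * ‖(1:ℝ) / 2 * (f y * (1 - f z) - f z * (1 - f y))‖
            ≤ (‖z - y‖ ^ s)⁻¹ * 1 * (1 / 2 * ((A / δ) * ‖z - y‖)) := by
              gcongr
          _ = (A / (2 * δ)) * (‖z - y‖ / ‖z - y‖ ^ s) := by
              field_simp
          _ = (A / (2 * δ)) * ‖z - y‖ ^ (1 - s) := by
              rw [Real.rpow_sub hw, Real.rpow_one]
      calc ENNReal.ofReal ‖(if z - y = 0 then 0 else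
              K (z - y) * ((1 - (‖z - y‖ / max δ ‖z - y‖) ^ (s + α) : ℝ) : ℂ))
            * ((((1 : ℝ) / 2) * (f y * (1 - f z) - f z * (1 - f y)) : ℝ) : ℂ)‖
            ≤ ENNReal.ofReal ((A / (2 * δ)) * stmt10phi s δ (z - y)) :=
              ENNReal.ofReal_le_ofReal hnorm
          _ = c₁ * p (z - y) := by
              rw [hc1, hpdef, ENNReal.ofReal_mul (by positivity)]
          _ ≤ c₁ * ((iS z + iS y) * p (z - y)) := by
              rw [show c₁ * p (z - y) = c₁ * (1 * p (z - y)) by rw [one_mul]]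
              refine mul_le_mul_right (mul_le_mul_left ?_ _) _
              rcases hmem with hm | hm
              · calc (1:ℝ≥0∞) = iS z := by rw [hiSdef]; simp [Set.indicator_of_mem hm]
                  _ ≤ iS z + iS y := le_self_add
              · calc (1:ℝ≥0∞) = iS y := by rw [hiSdef]; simp [Set.indicator_of_mem hm]
                  _ ≤ iS z + iS y := le_add_self
    · have hone : (‖z - y‖ / max δ ‖z - y‖ : ℝ) ^ (s + α) = 1 := by
        rw [max_eq_right (not_lt.mp hlt), div_self (norm_ne_zero_iff.mpr h0), Real.one_rpow]
      rw [if_neg h0, hone]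
      simp
  -- the key integral bounds
  have hKey : ∀ z, ∫⁻ y, p (z - y) ∂μ ≤ c₂ := fun z =>
    stmt10_lintegral_phi_le hs hΛ hδ μ hμ z
  have hKey' : ∀ y, ∫⁻ z, p (z - y) ∂μ ≤ c₂ := by
    intro y
    have hev : ∀ z, p (z - y) = p (y - z) := by
      intro z
      rw [hpdef]
      dsimp only
      rw [show z - y = -(y - z) by abel, stmt10phi_neg]
    simp_rw [hev]
    exact hKey y
  have hμS : μ S ≠ ⊤ := by
    refine ne_top_of_le_ne_top ?_ (measure_mono Set.diff_subset)
    exact (lt_of_le_of_lt (hμ x (r + 2 * δ) (by linarith)) ENNReal.ofReal_lt_top).ne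
  -- the main estimate, stated for an abstract g with the pointwise bound
  have main : ∀ (g : EuclideanSpace ℝ (Fin d) → EuclideanSpace ℝ (Fin d) → ℂ),
      (∀ z y, ENNReal.ofReal ‖g z y‖ ≤ c₁ * ((iS z + iS y) * p (z - y))) →
      ‖∫ z, ∫ y, g z y ∂μ ∂μ‖ ≤ (c₁ * (c₂ * μ S + c₂ * μ S)).toReal := by
    intro g hg
    have hpzm : ∀ z : EuclideanSpace ℝ (Fin d), Measurable fun y => p (z - y) :=
      fun z => hpm.comp (measurable_const.sub measurable_id)
    have hpym : ∀ y : EuclideanSpace ℝ (Fin d), Measurable fun z => p (z - y) :=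
      fun y => hpm.comp (measurable_id.sub measurable_const)
    have hm1 : ∀ z : EuclideanSpace ℝ (Fin d), Measurable fun y => (iS z + iS y) * p (z - y) :=
      fun z => (measurable_const.add hiSm).mul (hpzm z)
    have hm2 : ∀ z : EuclideanSpace ℝ (Fin d), Measurable fun y => iS z * p (z - y) :=
      fun z => (hpzm z).const_mul _
    have hm3 : ∀ y : EuclideanSpace ℝ (Fin d), Measurable fun z => iS y * p (z - y) :=
      fun y => (hpym y).const_mul _
    have hm4 : Measurable fun z : EuclideanSpace ℝ (Fin d) => iS z * c₂ :=
      hiSm.mul measurable_const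
    have hmeas1 : Measurable fun q : EuclideanSpace ℝ (Fin d) × EuclideanSpace ℝ (Fin d) =>
        iS q.2 * p (q.1 - q.2) :=
      (hiSm.comp measurable_snd).mul (hpm.comp (measurable_fst.sub measurable_snd))
    have hinner : ∀ z, ∫⁻ y, ENNReal.ofReal ‖g z y‖ ∂μ
        ≤ c₁ * (iS z * c₂ + ∫⁻ y, iS y * p (z - y) ∂μ) := by
      intro z
      calc ∫⁻ y, ENNReal.ofReal ‖g z y‖ ∂μ
          ≤ ∫⁻ y, c₁ * ((iS z + iS y) * p (z - y)) ∂μ := lintegral_mono fun y => hg z y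
        _ = c₁ * ∫⁻ y, (iS z + iS y) * p (z - y) ∂μ :=
            lintegral_const_mul c₁ (hm1 z)
        _ = c₁ * ∫⁻ y, (iS z * p (z - y) + iS y * p (z - y)) ∂μ := by
            congr 1
            apply lintegral_congr
            intro y
            ring
        _ = c₁ * ((∫⁻ y, iS z * p (z - y) ∂μ) + ∫⁻ y, iS y * p (z - y) ∂μ) := by
            rw [lintegral_add_left (hm2 z)]
        _ = c₁ * (iS z * (∫⁻ y, p (z - y) ∂μ) + ∫⁻ y, iS y * p (z - y) ∂μ) := by
            rw [lintegral_const_mul (iS z) (hpzm z)]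
        _ ≤ c₁ * (iS z * c₂ + ∫⁻ y, iS y * p (z - y) ∂μ) := by
            refine mul_le_mul_right (add_le_add_left (mul_le_mul_right (hKey z) _) _) _
    have hswap : ∫⁻ z, ∫⁻ y, iS y * p (z - y) ∂μ ∂μ ≤ c₂ * μ S := by
      rw [lintegral_lintegral_swap hmeas1.aemeasurable]
      calc ∫⁻ y, ∫⁻ z, iS y * p (z - y) ∂μ ∂μ
          = ∫⁻ y, iS y * ∫⁻ z, p (z - y) ∂μ ∂μ := by
            apply lintegral_congr
            intro y
            exact lintegral_const_mul (iS y) (hpym y)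
        _ ≤ ∫⁻ y, iS y * c₂ ∂μ := lintegral_mono fun y => mul_le_mul_right (hKey' y) _
        _ = c₂ * μ S := by
            have hi : ∀ y, iS y * c₂ = S.indicator (fun _ => c₂) y := by
              intro y
              rw [hiSdef]
              by_cases h : y ∈ S <;> simp [h]
            simp_rw [hi]
            exact lintegral_indicator_const hSmeas c₂
    have hIiS : ∫⁻ z, iS z * c₂ ∂μ = c₂ * μ S := by
      have hi : ∀ z, iS z * c₂ = S.indicator (fun _ => c₂) z := by
        intro z
        rw [hiSdef]
        by_cases h : z ∈ S <;> simp [h]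
      simp_rw [hi]
      exact lintegral_indicator_const hSmeas c₂
    have houter : ∫⁻ z, ∫⁻ y, ENNReal.ofReal ‖g z y‖ ∂μ ∂μ ≤ c₁ * (c₂ * μ S + c₂ * μ S) := by
      calc ∫⁻ z, ∫⁻ y, ENNReal.ofReal ‖g z y‖ ∂μ ∂μ
          ≤ ∫⁻ z, c₁ * (iS z * c₂ + ∫⁻ y, iS y * p (z - y) ∂μ) ∂μ := lintegral_mono hinner
        _ = c₁ * ∫⁻ z, (iS z * c₂ + ∫⁻ y, iS y * p (z - y) ∂μ) ∂μ :=
            lintegral_const_mul c₁ (hm4.add hmeas1.lintegral_prod_right')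
        _ = c₁ * ((∫⁻ z, iS z * c₂ ∂μ) + ∫⁻ z, ∫⁻ y, iS y * p (z - y) ∂μ ∂μ) := by
            rw [lintegral_add_left hm4]
        _ ≤ c₁ * (c₂ * μ S + c₂ * μ S) := by
            rw [hIiS]
            exact mul_le_mul_right (add_le_add_right hswap _) _
    have hfin : c₁ * (c₂ * μ S + c₂ * μ S) ≠ ⊤ := by
      apply ENNReal.mul_ne_top ENNReal.ofReal_ne_top
      exact ENNReal.add_ne_top.mpr
        ⟨ENNReal.mul_ne_top ENNReal.ofReal_ne_top hμS, ENNReal.mul_ne_top ENNReal.ofReal_ne_top hμS⟩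
    calc ‖∫ z, ∫ y, g z y ∂μ ∂μ‖
        ≤ (∫⁻ z, ENNReal.ofReal ‖∫ y, g z y ∂μ‖ ∂μ).toReal := norm_integral_le_lintegral_norm _
      _ ≤ (c₁ * (c₂ * μ S + c₂ * μ S)).toReal := by
          apply ENNReal.toReal_mono hfin
          refine le_trans (lintegral_mono fun z => ?_) houter
          exact ENNReal.ofReal_le_of_le_toReal (norm_integral_le_lintegral_norm _)
  -- conclude
  have hfinal := main _ (hptw _ rfl)
  refine le_trans hfinal ?_
  have h2c : c₂ * μ S + c₂ * μ S = (2 * c₂) * μ S := by ring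
  have hassoc : c₁ * ((2 * c₂) * μ S) = (c₁ * (2 * c₂)) * μ S := by ring
  rw [h2c, hassoc, ENNReal.toReal_mul]
  have hc12 : (c₁ * (2 * c₂)).toReal = 2 * 2 ^ s * Λ * A := by
    rw [hc1, hc2, show (2 : ℝ≥0∞) = ENNReal.ofReal 2 by norm_num,
      ← ENNReal.ofReal_mul (by norm_num), ← ENNReal.ofReal_mul (by positivity)]
    rw [ENNReal.toReal_ofReal (by positivity)]
    field_simp
  rw [hc12]
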